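/- For every prime number p, there exists a PrA⁻-structure M such that: (i) for every natural number m with 1 ≤ m < p and every x : M, there exist z : M and a natural number r < m with (m • z + r • one = x) ∨ (m • z + x = r • one); and (ii) there exists x : M such that for all z : M and all natural numbers r < p, ¬((p • z + r • one = x) ∨ (p • z + x = r • one)). -/

import Mathlib

/-- A model of the theory `PrA⁻`: an additive cancellative commutative monoid with
a distinguished element `one` satisfying the `PrA⁻` axioms. -/
structure PrAMinus (M : Type*) [AddCancelCommMonoid M] where
  one : M
  succ_ne_zero : ∀ x : M, x + one ≠ 0
  exists_pred : ∀ x : M, x ≠ 0 → ∃ y : M, x = y + one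
  total : ∀ x y : M, (∃ z, x + z = y) ∨ (∃ z, y + z = x)


/-- Rationals of the form k / n^j. -/
def PQSmooth (n : ℕ) (a : ℚ) : Prop := ∃ k : ℤ, ∃ j : ℕ, a = (k : ℚ) / (n : ℚ) ^ j

lemma pqsmooth_zero (n : ℕ) : PQSmooth n 0 := ⟨0, 0, by simp⟩

lemma pqsmooth_add {n : ℕ} (hn : (n:ℚ) ≠ 0) {a b : ℚ} (ha : PQSmooth n a) (hb : PQSmooth n b) :
    PQSmooth n (a + b) := by
  obtain ⟨k, j, rfl⟩ := ha
  obtain ⟨k', j', rfl⟩ := hb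
  have h1 : (n:ℚ)^j ≠ 0 := pow_ne_zero _ hn
  have h2 : (n:ℚ)^j' ≠ 0 := pow_ne_zero _ hn
  refine ⟨k * n ^ j' + k' * n ^ j, j + j', ?_⟩
  rw [div_add_div _ _ h1 h2, pow_add]
  push_cast
  ring_nf

lemma pqsmooth_sub {n : ℕ} (hn : (n:ℚ) ≠ 0) {a b : ℚ} (ha : PQSmooth n a) (hb : PQSmooth n b) :
    PQSmooth n (a - b) := by
  obtain ⟨k, j, rfl⟩ := ha
  obtain ⟨k', j', rfl⟩ := hb
  have h1 : (n:ℚ)^j ≠ 0 := pow_ne_zero _ hn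
  have h2 : (n:ℚ)^j' ≠ 0 := pow_ne_zero _ hn
  refine ⟨k * n ^ j' - k' * n ^ j, j + j', ?_⟩
  rw [div_sub_div _ _ h1 h2, pow_add]
  push_cast
  ring_nf

/-- dividing by a divisor of n stays smooth -/
lemma pqsmooth_div {n m : ℕ} (hn : (n:ℚ) ≠ 0) (hm : m ∣ n) (hm0 : m ≠ 0) {a : ℚ}
    (ha : PQSmooth n a) : PQSmooth n (a / m) := by
  obtain ⟨k, j, rfl⟩ := ha
  obtain ⟨c, rfl⟩ := hm
  refine ⟨k * c, j + 1, ?_⟩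
  have hmq : (m:ℚ) ≠ 0 := by exact_mod_cast hm0
  have hcq : (c:ℚ) ≠ 0 := by
    intro h
    apply hn; push_cast; rw [h]; ring
  push_cast
  field_simp
  ring

def Mcar (n : ℕ) (hn : (n:ℚ) ≠ 0) : AddSubmonoid (ℚ × ℤ) where
  carrier := {x | (x.1 = 0 ∧ 0 ≤ x.2) ∨ (0 < x.1 ∧ PQSmooth n x.1)}
  zero_mem' := Or.inl ⟨rfl, le_refl 0⟩
  add_mem' := by
    rintro x y (⟨h1, h2⟩ | ⟨h1, h2⟩) (⟨g1, g2⟩ | ⟨g1, g2⟩)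
    · exact Or.inl ⟨by simp [Prod.fst_add, h1, g1], by simpa using add_nonneg h2 g2⟩
    · exact Or.inr ⟨by simp [Prod.fst_add, h1, g1], by simpa [Prod.fst_add, h1] using g2⟩
    · exact Or.inr ⟨by simp [Prod.fst_add, g1, h1], by simpa [Prod.fst_add, g1] using h2⟩
    · exact Or.inr ⟨by simpa [Prod.fst_add] using add_pos h1 g1,
        by simpa [Prod.fst_add] using pqsmooth_add hn h2 g2⟩

variable {n : ℕ} {hn : (n:ℚ) ≠ 0}

lemma Mcar.fst_nonneg {x : ℚ × ℤ} (hx : x ∈ Mcar n hn) : 0 ≤ x.1 := by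
  rcases hx with ⟨h1, _⟩ | ⟨h1, _⟩
  · exact le_of_eq h1.symm
  · exact le_of_lt h1

lemma Mcar.fst_smooth {x : ℚ × ℤ} (hx : x ∈ Mcar n hn) : PQSmooth n x.1 := by
  rcases hx with ⟨h1, _⟩ | ⟨_, h2⟩
  · rw [h1]; exact pqsmooth_zero n
  · exact h2

instance instMcarCancel (n : ℕ) (hn : (n:ℚ) ≠ 0) : AddCancelCommMonoid (Mcar n hn) :=
  { (inferInstance : AddCommMonoid (Mcar n hn)) with
    add_left_cancel := fun a b c h => Subtype.ext (add_left_cancel (congrArg Subtype.val h)) }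

lemma Mcar.val_add (x y : Mcar n hn) : (x + y).val = x.val + y.val := rfl

lemma Mcar.val_nsmul (m : ℕ) (x : Mcar n hn) : (m • x).val = m • x.val := by
  induction m with
  | zero => simp
  | succ k ih => rw [succ_nsmul, succ_nsmul, Mcar.val_add, ih]

lemma nsmul_pair (m : ℕ) (a : ℚ) (b : ℤ) : m • ((a, b) : ℚ × ℤ) = ((m:ℚ) * a, (m:ℤ) * b) := by
  induction m with
  | zero => simp; rfl
  | succ k ih =>
      rw [succ_nsmul, ih, Prod.mk_add_mk]
      push_cast
      ring_nf

/-- The `one` element `(0,1)`. -/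
def MOne : Mcar n hn := ⟨(0, 1), Or.inl ⟨rfl, by norm_num⟩⟩

def Spra (n : ℕ) (hn : (n:ℚ) ≠ 0) : PrAMinus (Mcar n hn) where
  one := MOne
  succ_ne_zero := by
    intro x h
    have hv : x.val + (0, 1) = (0, 0) := congrArg Subtype.val h
    have h1 : x.val.1 = 0 := by
      have := congrArg Prod.fst hv
      simpa using this
    have h2 : x.val.2 + 1 = 0 := by
      have := congrArg Prod.snd hv
      simpa using this
    rcases x.2 with ⟨_, hb⟩ | ⟨ha, _⟩
    · omega
    · rw [h1] at ha; exact lt_irrefl _ ha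
  exists_pred := by
    intro x hx
    rcases hmem : x.2 with ⟨h1, h2⟩ | ⟨h1, h2⟩
    · have hb : x.val.2 ≠ 0 := by
        intro h
        apply hx
        apply Subtype.ext
        exact Prod.ext h1 h
      refine ⟨⟨(0, x.val.2 - 1), Or.inl ⟨rfl, by omega⟩⟩, ?_⟩
      apply Subtype.ext
      rw [Mcar.val_add]
      show x.val = (0, x.val.2 - 1) + (0, 1)
      rw [Prod.mk_add_mk]
      exact Prod.ext (by simpa using h1) (by simp)
    · refine ⟨⟨(x.val.1, x.val.2 - 1), Or.inr ⟨h1, h2⟩⟩, ?_⟩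
      apply Subtype.ext
      rw [Mcar.val_add]
      show x.val = (x.val.1, x.val.2 - 1) + (0, 1)
      rw [Prod.mk_add_mk]
      exact Prod.ext (by simp) (by simp)
  total := by
    intro x y
    rcases lt_trichotomy x.val.1 y.val.1 with hlt | heq | hgt
    · left
      refine ⟨⟨(y.val.1 - x.val.1, y.val.2 - x.val.2),
        Or.inr ⟨by simpa using sub_pos.mpr hlt, pqsmooth_sub hn (Mcar.fst_smooth y.2) (Mcar.fst_smooth x.2)⟩⟩, ?_⟩
      apply Subtype.ext
      rw [Mcar.val_add]
      show x.val + (y.val.1 - x.val.1, y.val.2 - x.val.2) = y.val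
      exact Prod.ext (by simp) (by simp)
    · rcases le_total x.val.2 y.val.2 with hle | hle
      · left
        refine ⟨⟨(0, y.val.2 - x.val.2), Or.inl ⟨rfl, by omega⟩⟩, ?_⟩
        apply Subtype.ext
        rw [Mcar.val_add]
        show x.val + (0, y.val.2 - x.val.2) = y.val
        exact Prod.ext (by simp [heq]) (by simp)
      · right
        refine ⟨⟨(0, x.val.2 - y.val.2), Or.inl ⟨rfl, by omega⟩⟩, ?_⟩
        apply Subtype.ext
        rw [Mcar.val_add]
        show y.val + (0, x.val.2 - y.val.2) = x.val
        exact Prod.ext (by simp [heq]) (by simp)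
    · right
      refine ⟨⟨(x.val.1 - y.val.1, x.val.2 - y.val.2),
        Or.inr ⟨by simpa using sub_pos.mpr hgt, pqsmooth_sub hn (Mcar.fst_smooth x.2) (Mcar.fst_smooth y.2)⟩⟩, ?_⟩
      apply Subtype.ext
      rw [Mcar.val_add]
      show y.val + (x.val.1 - y.val.1, x.val.2 - y.val.2) = x.val
      exact Prod.ext (by simp) (by simp)

lemma nsmul_fst (m : ℕ) (w : ℚ × ℤ) : (m • w).1 = (m : ℚ) * w.1 := by
  rw [show w = (w.1, w.2) from rfl, nsmul_pair]

lemma nsmul_snd (m : ℕ) (w : ℚ × ℤ) : (m • w).2 = (m : ℤ) * w.2 := by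
  rw [show w = (w.1, w.2) from rfl, nsmul_pair]

lemma Spra_one (n : ℕ) (hn : (n:ℚ) ≠ 0) : (Spra n hn).one = (MOne : Mcar n hn) := rfl

theorem exists_prAMinus_model_failing_div_by_p (p : ℕ) (hp : p.Prime) :
    ∃ (M : Type) (_ : AddCancelCommMonoid M) (S : PrAMinus M),
      (∀ m : ℕ, 1 ≤ m → m < p → ∀ x : M,
        ∃ (z : M) (r : ℕ), r < m ∧ (m • z + r • S.one = x ∨ m • z + x = r • S.one)) ∧
      (∃ x : M, ∀ (z : M) (r : ℕ), r < p →
        ¬(p • z + r • S.one = x ∨ p • z + x = r • S.one)) := by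
  set n := (p - 1).factorial with hndef
  have hn0 : 0 < n := Nat.factorial_pos _
  have hn : (n : ℚ) ≠ 0 := Nat.cast_ne_zero.mpr hn0.ne'
  refine ⟨Mcar n hn, instMcarCancel n hn, Spra n hn, ?_, ?_⟩
  · intro m h1 h2 x
    have hmdvd : m ∣ n := Nat.dvd_factorial h1 (by omega)
    have hmq : (m : ℚ) ≠ 0 := Nat.cast_ne_zero.mpr (by omega)
    have hmz : (0 : ℤ) < (m : ℤ) := by exact_mod_cast h1
    set b := x.val.2 with hbdef
    set q : ℤ := b / (m : ℤ) with hqdef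
    set r : ℕ := (b % (m : ℤ)).toNat with hrdef
    have hmodnn : 0 ≤ b % (m : ℤ) := Int.emod_nonneg b (by omega)
    have hmodlt : b % (m : ℤ) < m := Int.emod_lt_of_pos b hmz
    have hr : ((r : ℤ)) = b % (m : ℤ) := by omega
    have hrlt : r < m := by omega
    have hzmem : ((x.val.1 / m, q) : ℚ × ℤ) ∈ Mcar n hn := by
      rcases x.2 with ⟨hx1, hx2⟩ | ⟨hx1, hx2⟩
      · exact Or.inl ⟨by show x.val.1 / m = 0; rw [hx1, zero_div],
          Int.ediv_nonneg hx2 (by omega)⟩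
      · exact Or.inr ⟨div_pos hx1 (by positivity),
          pqsmooth_div hn hmdvd (by omega) hx2⟩
    refine ⟨⟨_, hzmem⟩, r, hrlt, Or.inl ?_⟩
    apply Subtype.ext
    rw [Mcar.val_add, Mcar.val_nsmul, Mcar.val_nsmul]
    rw [Spra_one]
    show m • ((x.val.1 / m : ℚ), q) + r • (((0 : ℚ), (1 : ℤ)) : ℚ × ℤ) = x.val
    rw [nsmul_pair, nsmul_pair, Prod.mk_add_mk]
    refine Prod.ext ?_ ?_
    · show (m : ℚ) * (x.val.1 / m) + (r : ℚ) * 0 = x.val.1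
      rw [mul_comm ((m : ℚ)) _, div_mul_cancel₀ _ hmq, mul_zero, add_zero]
    · show (m : ℤ) * q + (r : ℤ) * 1 = b
      rw [mul_one, hr, hqdef]
      exact Int.mul_ediv_add_emod b m
  · refine ⟨⟨(1, 0), Or.inr ⟨one_pos, 1, 0, by norm_num⟩⟩, ?_⟩
    rintro z r hrp (h | h)
    · have hv := congrArg Subtype.val h
      rw [Mcar.val_add, Mcar.val_nsmul, Mcar.val_nsmul, Spra_one] at hv
      have h1 : (p : ℚ) * z.val.1 = 1 := by
        have := congrArg Prod.fst hv
        simpa [nsmul_fst, MOne] using this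
      rcases z.2 with ⟨hz1, _⟩ | ⟨hz1, k, j, hk⟩
      · rw [hz1, mul_zero] at h1; exact zero_ne_one h1
      · rw [hk, ← mul_div_assoc, div_eq_one_iff_eq (pow_ne_zero _ hn)] at h1
        have hz : (p : ℤ) * k = (n : ℤ) ^ j := by exact_mod_cast h1
        have hd : (p : ℤ) ∣ ((n ^ j : ℕ) : ℤ) := by
          push_cast
          exact ⟨k, hz.symm⟩
        have hdn : p ∣ n ^ j := by exact_mod_cast hd
        have hpn : p ∣ n := hp.dvd_of_dvd_pow hdn
        rw [hndef, Nat.Prime.dvd_factorial hp] at hpn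
        have := hp.two_le
        omega
    · have hv := congrArg Subtype.val h
      rw [Mcar.val_add, Mcar.val_nsmul, Mcar.val_nsmul, Spra_one] at hv
      have h1 : (p : ℚ) * z.val.1 + 1 = 0 := by
        have := congrArg Prod.fst hv
        simpa [nsmul_fst, MOne] using this
      have hz1 : 0 ≤ z.val.1 := Mcar.fst_nonneg z.2
      have hp0 : (0 : ℚ) ≤ (p : ℚ) := by positivity
      nlinarith
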